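/- Under the one-step contraction E[F(ω^{τ+1})] − F* ≤ (1 − 2ρφ₂)(F(ω^τ) − F*) + φ₁ with 0 < 2ρφ₂ < 1, the asymptotic optimality gap satisfies limsup_{τ→∞} (F(ω^τ) − F*) ≤ φ₁/(2ρφ₂). Moreover, with η = 1/L_c, φ₁/(2ρφ₂) ≤ (1/(2ρ)) · ∑_m A²κ₁ D_m² ζ_m/(D² I_m) / (2 − A²κ₂ ∑_m D_m²ζ_m/(D² I_m)), which is proportional to ∑_m D_m² ζ_m/(D² I_m) when A²κ₂ ∑_m D_m²ζ_m/(D²I_m) is bounded away from 2. -/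

import Mathlib

open Filter

theorem stmt_13 {M : Type*} [Fintype M] (e : ℕ → ℝ) (ρ φ₁ φ₂ : ℝ)
    (Lc η A κ₁ κ₂ Dtot : ℝ) (ζ D I : M → ℝ) (S : ℝ)
    (hρ : 0 < ρ) (hφ₁ : 0 ≤ φ₁)
    (he0 : ∀ τ, 0 ≤ e τ)
    (hrec : ∀ τ, e (τ + 1) ≤ (1 - 2 * ρ * φ₂) * e τ + φ₁)
    (hc0 : 0 < 2 * ρ * φ₂) (hc1 : 2 * ρ * φ₂ < 1)
    (hLc : 0 < Lc) (hη : η = 1 / Lc) (hκ₁ : 0 ≤ κ₁) (hκ₂ : 0 ≤ κ₂)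
    (hζ : ∀ m, ζ m = 0 ∨ ζ m = 1) (hI : ∀ m, 1 ≤ I m) (hD : ∀ m, 0 < D m)
    (hDtot : 0 < Dtot)
    (hS : S = ∑ m, (D m) ^ 2 * ζ m / (Dtot ^ 2 * I m))
    (hφ₁def : φ₁ = η ^ 2 * Lc / 2 * (A ^ 2 * κ₁ * S))
    (hφ₂def : φ₂ = η - η ^ 2 * Lc / 2 * (A ^ 2 * κ₂ * S))
    (hbdd : A ^ 2 * κ₂ * S < 2) :
    limsup e atTop ≤ φ₁ / (2 * ρ * φ₂) ∧
      φ₁ / (2 * ρ * φ₂) ≤ 1 / (2 * ρ) * (A ^ 2 * κ₁ * S) / (2 - A ^ 2 * κ₂ * S) := by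
  set c : ℝ := 2 * ρ * φ₂ with hc
  set L : ℝ := φ₁ / c with hL
  have hcL : c * L = φ₁ := by
    have hc' : c ≠ 0 := ne_of_gt hc0
    rw [hL]; field_simp
  constructor
  · -- limsup bound
    have hb : ∀ τ, e τ ≤ L + (1 - c) ^ τ * (e 0 - L) := by
      intro τ
      induction τ with
      | zero => simp
      | succ n ih =>
        have h1 : (1 - c) * e n ≤ (1 - c) * (L + (1 - c) ^ n * (e 0 - L)) := by
          apply mul_le_mul_of_nonneg_left ih (by linarith)
        calc e (n + 1) ≤ (1 - c) * e n + φ₁ := hrec n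
          _ ≤ (1 - c) * (L + (1 - c) ^ n * (e 0 - L)) + φ₁ := by linarith
          _ = L + (1 - c) ^ (n + 1) * (e 0 - L) := by
              rw [pow_succ]; linear_combination -hcL
    have htend : Tendsto (fun τ => L + (1 - c) ^ τ * (e 0 - L)) atTop (nhds L) := by
      have h0 : Tendsto (fun τ : ℕ => (1 - c) ^ τ) atTop (nhds 0) := by
        apply tendsto_pow_atTop_nhds_zero_of_lt_one (by linarith) (by linarith)
      have := (h0.mul_const (e 0 - L)).const_add L
      simpa using this
    have hle := Filter.limsup_le_limsup (Filter.Eventually.of_forall hb)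
      (Filter.isCoboundedUnder_le_of_le atTop he0)
      htend.isBoundedUnder_le
    calc limsup e atTop ≤ limsup (fun τ => L + (1 - c) ^ τ * (e 0 - L)) atTop := hle
      _ = L := htend.limsup_eq
  · -- algebraic bound
    have hη' : η = 1 / Lc := hη
    have hφ₂' : φ₂ = (2 - A ^ 2 * κ₂ * S) / (2 * Lc) := by
      rw [hφ₂def, hη']; field_simp
    have hφ₁' : φ₁ = A ^ 2 * κ₁ * S / (2 * Lc) := by
      rw [hφ₁def, hη']; field_simp
    have hpos : 0 < 2 - A ^ 2 * κ₂ * S := by linarith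
    apply le_of_eq
    rw [hL, hc, hφ₁', hφ₂']
    have h1 : Lc ≠ 0 := ne_of_gt hLc
    have h2 : ρ ≠ 0 := ne_of_gt hρ
    have h3 : (2 - A ^ 2 * κ₂ * S) ≠ 0 := ne_of_gt hpos
    field_simp
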